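/- arXiv:math/0611163 — 2 statements merged into one kernel-verified Lean document; each statement's English description precedes it below -/
import Mathlib

section
/- Let n ≥ 2, ω, ω⊥ orthonormal in ℝⁿ, c > 0, τ > c^{-2}, z = cτ(ω + i√(1-1/(c²τ)) ω⊥), and v(x,t) = exp(-(z·z)t)exp(x·z). Fix s ∈ ℝ and (x,t) ∈ ℝⁿ × ℝ. If s < t - c x·ω then e^{τs}|v(x,t)| → 0 as τ → ∞, and if s > t - c x·ω then e^{τs}|v(x,t)| → ∞ as τ → ∞. -/
open Filter

/-- Let `n ≥ 2`, `ω, ω⊥` orthonormal in `ℝⁿ`, `c > 0`, and for `τ > c⁻²` let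
`z(τ) = cτ(ω + i√(1-1/(c²τ)) ω⊥)` and `v(x,t;τ) = exp(-(z·z)t) exp(x·z)`.
Fix `s ∈ ℝ` and `(x,t)`.  If `s < t - c x·ω` then `e^{τs}|v(x,t;τ)| → 0` as
`τ → ∞`, and if `s > t - c x·ω` then `e^{τs}|v(x,t;τ)| → ∞`. -/
theorem stmt7 (n : ℕ) (hn : 2 ≤ n)
    (ω ωperp : EuclideanSpace ℝ (Fin n))
    (hω : ‖ω‖ = 1) (hωperp : ‖ωperp‖ = 1) (horth : (inner ℝ ω ωperp : ℝ) = 0)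
    (c : ℝ) (hc : 0 < c)
    (z : ℝ → Fin n → ℂ)
    (hz : ∀ τ : ℝ, c⁻¹ ^ 2 < τ → ∀ j, z τ j = (c : ℂ) * τ *
      ((ω j : ℂ) + Complex.I * (Real.sqrt (1 - 1 / (c ^ 2 * τ)) : ℂ) * (ωperp j : ℂ)))
    (v : EuclideanSpace ℝ (Fin n) → ℝ → ℝ → ℂ)
    (hv : ∀ x t τ, v x t τ =
      Complex.exp (-(∑ j, z τ j ^ 2) * t) * Complex.exp (∑ j, (x j : ℂ) * z τ j))
    (x : EuclideanSpace ℝ (Fin n)) (t s : ℝ) :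
    (s < t - c * (inner ℝ x ω : ℝ) →
      Tendsto (fun τ : ℝ => Real.exp (τ * s) * ‖v x t τ‖) atTop (nhds 0)) ∧
    (s > t - c * (inner ℝ x ω : ℝ) →
      Tendsto (fun τ : ℝ => Real.exp (τ * s) * ‖v x t τ‖) atTop atTop) := by
  have hωω : (∑ j, (ω j) * (ω j)) = 1 := by
    have h1 : (inner ℝ ω ω : ℝ) = 1 := by
      rw [real_inner_self_eq_norm_sq, hω]; norm_num
    rw [PiLp.inner_apply] at h1; simpa [RCLike.inner_apply, pow_two] using h1
  have hpp : (∑ j, (ωperp j) * (ωperp j)) = 1 := by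
    have h1 : (inner ℝ ωperp ωperp : ℝ) = 1 := by
      rw [real_inner_self_eq_norm_sq, hωperp]; norm_num
    rw [PiLp.inner_apply] at h1; simpa [RCLike.inner_apply, pow_two] using h1
  have hop : (∑ j, (ω j) * (ωperp j)) = 0 := by
    simpa [PiLp.inner_apply, RCLike.inner_apply, mul_comm] using horth
  have hxω : (∑ j, (x j) * (ω j)) = (inner ℝ x ω : ℝ) := by
    simp [PiLp.inner_apply, RCLike.inner_apply, mul_comm]
  -- main eventual equality
  have key : (fun τ : ℝ => Real.exp (τ * s) * ‖v x t τ‖)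
      =ᶠ[atTop] fun τ => Real.exp (τ * (s - (t - c * (inner ℝ x ω : ℝ)))) := by
    filter_upwards [eventually_gt_atTop (c⁻¹ ^ 2), eventually_gt_atTop 0] with τ hτ hτ0
    set a := Real.sqrt (1 - 1 / (c ^ 2 * τ)) with ha
    have hcτ : (1:ℝ) < c ^ 2 * τ := by
      rw [inv_pow] at hτ
      calc (1:ℝ) = c^2 * (c^2)⁻¹ := by field_simp
      _ < c^2 * τ := by
        exact mul_lt_mul_of_pos_left hτ (by positivity)
    have ha2 : a ^ 2 = 1 - 1 / (c ^ 2 * τ) := by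
      rw [ha, Real.sq_sqrt]
      have : 1 / (c^2 * τ) < 1 := by
        rw [div_lt_one (by linarith)]; exact hcτ
      linarith
    have hsum1 : (∑ j, z τ j ^ 2) = (τ : ℂ) := by
      have e1 : (∑ j, z τ j ^ 2) = ∑ j, ((c:ℂ)^2 * τ^2 * ((ω j : ℂ) * (ω j : ℂ))
          + (c:ℂ)^2 * τ^2 * (2 * Complex.I * a) * ((ω j : ℂ) * (ωperp j : ℂ))
          + (c:ℂ)^2 * τ^2 * Complex.I^2 * (a:ℂ)^2 * ((ωperp j : ℂ) * (ωperp j : ℂ))) := by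
        refine Finset.sum_congr rfl fun j _ => ?_
        rw [hz τ hτ j]; ring
      have c1 : (∑ j, ((ω j : ℂ) * (ω j : ℂ))) = 1 := by
        push_cast [← Complex.ofReal_sum]
        norm_cast
      have c2 : (∑ j, ((ω j : ℂ) * (ωperp j : ℂ))) = 0 := by
        push_cast [← Complex.ofReal_sum]
        norm_cast
      have c3 : (∑ j, ((ωperp j : ℂ) * (ωperp j : ℂ))) = 1 := by
        push_cast [← Complex.ofReal_sum]
        norm_cast
      rw [e1]
      simp only [Finset.sum_add_distrib, ← Finset.mul_sum, c1, c2, c3]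
      have ha2c : ((a:ℂ))^2 = 1 - 1 / ((c:ℂ)^2 * τ) := by
        rw [← Complex.ofReal_pow, ha2]
        push_cast
        ring
      rw [Complex.I_sq, ha2c]
      have hcne : (c:ℂ) ≠ 0 := by exact_mod_cast hc.ne'
      have hτne : (τ:ℂ) ≠ 0 := by exact_mod_cast hτ0.ne'
      field_simp
      ring
    have hsum2 : (∑ j, (x j : ℂ) * z τ j) =
        ((c * τ * (inner ℝ x ω : ℝ) : ℝ) : ℂ) + ((c * τ * a * (inner ℝ x ωperp : ℝ) : ℝ) : ℂ) * Complex.I := by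
      have e1 : (∑ j, (x j : ℂ) * z τ j) = ∑ j, ((c:ℂ) * τ * ((x j : ℂ) * (ω j : ℂ))
          + (c:ℂ) * τ * (Complex.I * a) * ((x j : ℂ) * (ωperp j : ℂ))) := by
        refine Finset.sum_congr rfl fun j _ => ?_
        rw [hz τ hτ j]; ring
      have c1 : (∑ j, (x j : ℂ) * (ω j : ℂ)) = ((inner ℝ x ω : ℝ) : ℂ) := by
        rw [← hxω]; push_cast; rfl
      have c2 : (∑ j, (x j : ℂ) * (ωperp j : ℂ)) = ((inner ℝ x ωperp : ℝ) : ℂ) := by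
        have : (∑ j, (x j) * (ωperp j)) = (inner ℝ x ωperp : ℝ) := by
          simp [PiLp.inner_apply, RCLike.inner_apply, mul_comm]
        rw [← this]; push_cast; rfl
      rw [e1]
      simp only [Finset.sum_add_distrib, ← Finset.mul_sum, c1, c2]
      push_cast
      ring
    rw [hv, hsum1, hsum2, norm_mul, Complex.norm_exp, Complex.norm_exp]
    simp only [Complex.add_re, Complex.mul_re, Complex.neg_re, Complex.ofReal_re,
      Complex.ofReal_im, Complex.neg_im, Complex.I_re, Complex.I_im, Complex.mul_im]
    rw [← Real.exp_add, ← Real.exp_add]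
    ring_nf
  constructor
  · intro hs
    have hk : s - (t - c * (inner ℝ x ω : ℝ)) < 0 := by linarith
    refine Tendsto.congr' key.symm ?_
    have : Tendsto (fun τ : ℝ => τ * (s - (t - c * (inner ℝ x ω : ℝ)))) atTop atBot :=
      Tendsto.atTop_mul_const_of_neg hk tendsto_id
    exact Real.tendsto_exp_atBot.comp this
  · intro hs
    have hk : 0 < s - (t - c * (inner ℝ x ω : ℝ)) := by linarith
    refine Tendsto.congr' key.symm ?_
    have : Tendsto (fun τ : ℝ => τ * (s - (t - c * (inner ℝ x ω : ℝ)))) atTop atTop :=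
      Tendsto.atTop_mul_const hk tendsto_id
    exact Real.tendsto_exp_atTop.comp this
end

section
/- Let δ > 0, C₁, C₂ > 0, p ≥ 0, T₀ ∈ ℝ, ω ∈ ℝⁿ a unit vector, and let Ω ⊂ ℝⁿ be bounded. Suppose D ⊂ Ω̄ × [T₀, T₀+δ] is measurable, ρ : D → ℝ is measurable with ρ ≥ C₂ a.e. on D, and the slices D(s) = {x : (x, T₀+s) ∈ D} satisfy |D(s)| ≥ C₁ s^p for a.e. s ∈ [0, δ]. Then for all τ > 0, e^{τT₀} ∫_D ρ(x,t) e^{√τ x·ω - τt} dx dt ≥ C₁ C₂ e^{√τ m} τ^{-(p+1)} ∫₀^{τδ} ξ^p e^{-ξ} dξ, where m = inf_{x∈Ω} x·ω. -/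
open MeasureTheory

/-- Lower bound (Lemma 3.1, left half).  Let `δ, C₁, C₂ > 0`, `p ≥ 0`,
`T₀ ∈ ℝ`, `ω` a unit vector, `Ω` bounded.  Suppose `D ⊆ Ω̄ × [T₀, T₀+δ]` is
measurable, `ρ ≥ C₂` a.e. on `D`, and the slices
`D(s) = {x : (x, T₀+s) ∈ D}` satisfy `|D(s)| ≥ C₁ s^p` for a.e. `s ∈ [0, δ]`.
Then for all `τ > 0`,
`e^{τT₀} ∫_D ρ e^{√τ x·ω - τt} ≥ C₁C₂ e^{√τ m} τ^{-(p+1)} ∫₀^{τδ} ξ^p e^{-ξ} dξ`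
with `m = inf_{x ∈ Ω} x·ω`. -/
theorem stmt16 (n : ℕ) (δ C₁ C₂ p T₀ : ℝ)
    (hδ : 0 < δ) (hC₁ : 0 < C₁) (hC₂ : 0 < C₂) (hp : 0 ≤ p)
    (ω : EuclideanSpace ℝ (Fin n)) (hω : ‖ω‖ = 1)
    (Ω : Set (EuclideanSpace ℝ (Fin n))) (hΩb : Bornology.IsBounded Ω)
    (hΩne : Ω.Nonempty)
    (D : Set (EuclideanSpace ℝ (Fin n) × ℝ)) (hD : MeasurableSet D)
    (hDsub : D ⊆ (closure Ω) ×ˢ Set.Icc T₀ (T₀ + δ))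
    (ρ : EuclideanSpace ℝ (Fin n) × ℝ → ℝ) (hρm : Measurable ρ)
    (hρ : ∀ᵐ z ∂(volume.restrict D), C₂ ≤ ρ z)
    (hslice : ∀ᵐ s ∂(volume.restrict (Set.Icc (0:ℝ) δ)),
      C₁ * s ^ p ≤ (volume {x | (x, T₀ + s) ∈ D}).toReal)
    (hint : ∀ τ : ℝ, 0 < τ → IntegrableOn
      (fun z => ρ z * Real.exp (Real.sqrt τ * (inner ℝ z.1 ω : ℝ) - τ * z.2)) D volume)
    (m : ℝ) (hm : m = sInf ((fun x => (inner ℝ x ω : ℝ)) '' Ω)) :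
    ∀ τ : ℝ, 0 < τ →
      C₁ * C₂ * Real.exp (Real.sqrt τ * m) * τ ^ (-(p + 1)) *
          ∫ ξ in (0:ℝ)..(τ * δ), ξ ^ p * Real.exp (-ξ)
        ≤ Real.exp (τ * T₀) *
            ∫ z in D, ρ z * Real.exp (Real.sqrt τ * (inner ℝ z.1 ω : ℝ) - τ * z.2) := by
  intro τ hτ
  have hT : T₀ ≤ T₀ + δ := by linarith
  -- finiteness of D
  have hDfin : volume D ≠ ⊤ := by
    refine ((measure_mono hDsub).trans_lt ?_).ne
    rw [Measure.volume_eq_prod, Measure.prod_prod]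
    exact ENNReal.mul_lt_top hΩb.closure.measure_lt_top isCompact_Icc.measure_lt_top
  -- m is a lower bound on closure Ω
  have hmle : ∀ x ∈ closure Ω, m ≤ (inner ℝ x ω : ℝ) := by
    have hbdd : BddBelow ((fun x => (inner ℝ x ω : ℝ)) '' Ω) := by
      obtain ⟨R, hR⟩ := hΩb.subset_closedBall 0
      refine ⟨-R, ?_⟩
      rintro _ ⟨x, hx, rfl⟩
      have h1 : |(inner ℝ x ω : ℝ)| ≤ ‖x‖ * ‖ω‖ := abs_real_inner_le_norm x ω
      have h2 : ‖x‖ ≤ R := by simpa [Metric.mem_closedBall, dist_zero_right] using hR hx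
      rw [hω, mul_one] at h1
      have := (abs_le.1 h1).1
      linarith
    intro x hx
    have hcl : IsClosed {y : EuclideanSpace ℝ (Fin n) | m ≤ (inner ℝ y ω : ℝ)} :=
      isClosed_le continuous_const (continuous_id.inner continuous_const)
    have hsub : Ω ⊆ {y : EuclideanSpace ℝ (Fin n) | m ≤ (inner ℝ y ω : ℝ)} :=
      fun y hy => hm ▸ csInf_le hbdd ⟨y, hy, rfl⟩
    exact closure_minimal hsub hcl hx
  -- slice measurability and finiteness
  have hsliceMeas : ∀ t : ℝ, MeasurableSet {x : EuclideanSpace ℝ (Fin n) | (x, t) ∈ D} :=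
    fun t => hD.preimage measurable_prodMk_right
  have hsliceFin : ∀ t : ℝ, volume {x : EuclideanSpace ℝ (Fin n) | (x, t) ∈ D} ≠ ⊤ := by
    intro t
    have hsub : {x : EuclideanSpace ℝ (Fin n) | (x, t) ∈ D} ⊆ closure Ω :=
      fun x hx => (hDsub hx).1
    exact ((measure_mono hsub).trans_lt hΩb.closure.measure_lt_top).ne
  set F : ℝ → ENNReal := fun t => volume {x : EuclideanSpace ℝ (Fin n) | (x, t) ∈ D} with hF
  -- main lintegral identity (Fubini)
  have hI : ∫⁻ z in D, ENNReal.ofReal (Real.exp (-(τ * z.2))) ∂volume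
      = ∫⁻ t, ENNReal.ofReal (Real.exp (-(τ * t))) * F t := by
    have hmeas : Measurable fun z : EuclideanSpace ℝ (Fin n) × ℝ =>
        D.indicator (fun z : EuclideanSpace ℝ (Fin n) × ℝ =>
          ENNReal.ofReal (Real.exp (-(τ * z.2)))) z :=
      Measurable.indicator
        ((Real.measurable_exp.comp (measurable_snd.const_mul τ).neg).ennreal_ofReal) hD
    rw [← lintegral_indicator hD _, Measure.volume_eq_prod,
      lintegral_prod_symm _ hmeas.aemeasurable]
    refine lintegral_congr fun t => ?_
    have heq : (fun x : EuclideanSpace ℝ (Fin n) =>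
        D.indicator (fun z : EuclideanSpace ℝ (Fin n) × ℝ =>
          ENNReal.ofReal (Real.exp (-(τ * z.2)))) (x, t))
        = fun x => ({x : EuclideanSpace ℝ (Fin n) | (x, t) ∈ D}).indicator
            (fun _ => ENNReal.ofReal (Real.exp (-(τ * t)))) x := by
      ext x
      by_cases h : (x, t) ∈ D <;> simp [Set.indicator, h]
    rw [heq, lintegral_indicator (hsliceMeas t) _, setLIntegral_const]
  -- translated slice bound
  have hae0 : ∀ᵐ t ∂(volume.restrict (Set.Icc T₀ (T₀ + δ))),
      C₁ * (t - T₀) ^ p ≤ (F t).toReal := by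
    rw [ae_iff, Measure.restrict_apply' measurableSet_Icc] at hslice ⊢
    have hset : {t : ℝ | ¬ C₁ * (t - T₀) ^ p ≤ (F t).toReal} ∩ Set.Icc T₀ (T₀ + δ)
        = (fun t => t + -T₀) ⁻¹'
          ({s : ℝ | ¬ C₁ * s ^ p ≤ (volume {x | (x, T₀ + s) ∈ D}).toReal}
            ∩ Set.Icc 0 δ) := by
      ext t
      simp only [Set.mem_inter_iff, Set.mem_setOf_eq, Set.mem_Icc, Set.mem_preimage, hF]
      have h1 : T₀ + (t + -T₀) = t := by ring
      rw [h1, ← sub_eq_add_neg]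
      constructor <;> rintro ⟨h2, h3, h4⟩ <;> exact ⟨h2, by linarith, by linarith⟩
    rw [hset, measure_preimage_add_right]
    exact hslice
  -- continuity / integrability of the comparison function
  set G : ℝ → ℝ := fun t => Real.exp (-(τ * t)) * (C₁ * (t - T₀) ^ p) with hG
  have hrpow : Continuous fun t : ℝ => (t - T₀) ^ p := by
    have h1 : Continuous fun y : ℝ => y ^ p :=
      continuous_iff_continuousAt.2 fun x => Real.continuousAt_rpow_const x p (Or.inr hp)
    exact h1.comp (continuous_id.sub continuous_const)
  have hGcont : Continuous G :=
    (Real.continuous_exp.comp (continuous_const.mul continuous_id).neg).mul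
      (continuous_const.mul hrpow)
  have hGint : IntegrableOn G (Set.Icc T₀ (T₀ + δ)) volume :=
    hGcont.continuousOn.integrableOn_Icc
  have hGnn : 0 ≤ᵐ[volume.restrict (Set.Icc T₀ (T₀ + δ))] G := by
    filter_upwards [ae_restrict_mem measurableSet_Icc] with t ht
    exact mul_nonneg (Real.exp_pos _).le
      (mul_nonneg hC₁.le (Real.rpow_nonneg (by linarith [ht.1]) p))
  -- lintegral comparison
  have hJleI : ENNReal.ofReal (∫ t in Set.Icc T₀ (T₀ + δ), G t)
      ≤ ∫⁻ z in D, ENNReal.ofReal (Real.exp (-(τ * z.2))) ∂volume := by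
    rw [ofReal_integral_eq_lintegral_ofReal hGint hGnn, hI]
    refine le_trans ?_ (setLIntegral_le_lintegral (Set.Icc T₀ (T₀ + δ)) _)
    refine lintegral_mono_ae ?_
    filter_upwards [hae0] with t h1
    rw [hG]
    simp only
    rw [ENNReal.ofReal_mul (Real.exp_pos _).le]
    exact mul_le_mul_right ((ENNReal.ofReal_le_iff_le_toReal (hsliceFin t)).2 h1) _
  -- compute J
  set A : ℝ := ∫ s in (0:ℝ)..δ, s ^ p * Real.exp (-(τ * s)) with hA
  have hAnn : 0 ≤ A := by
    rw [hA]
    apply intervalIntegral.integral_nonneg hδ.le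
    intro s hs
    exact mul_nonneg (Real.rpow_nonneg hs.1 p) (Real.exp_pos _).le
  have hJ : (∫ t in Set.Icc T₀ (T₀ + δ), G t)
      = Real.exp (-(τ * T₀)) * (C₁ * A) := by
    rw [integral_Icc_eq_integral_Ioc, ← intervalIntegral.integral_of_le hT]
    have h := intervalIntegral.integral_comp_sub_right
      (a := T₀) (b := T₀ + δ)
      (fun s => Real.exp (-(τ * (s + T₀))) * (C₁ * s ^ p)) T₀
    simp only [sub_add_cancel, sub_self, add_sub_cancel_left] at h
    rw [hG]
    simp only
    rw [h]
    have hptw : ∀ s : ℝ, Real.exp (-(τ * (s + T₀))) * (C₁ * s ^ p)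
        = Real.exp (-(τ * T₀)) * (C₁ * (s ^ p * Real.exp (-(τ * s)))) := by
      intro s
      rw [show -(τ * (s + T₀)) = -(τ * s) + -(τ * T₀) from by ring, Real.exp_add]
      ring
    simp only [hptw]
    rw [intervalIntegral.integral_const_mul, intervalIntegral.integral_const_mul]
  -- substitution ξ = τ s
  have hsub2 : τ ^ (-(p + 1)) * ∫ ξ in (0:ℝ)..(τ * δ), ξ ^ p * Real.exp (-ξ) = A := by
    have h := intervalIntegral.integral_comp_mul_left
      (a := (0:ℝ)) (b := δ) (fun ξ => ξ ^ p * Real.exp (-ξ)) hτ.ne'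
    rw [mul_zero, smul_eq_mul] at h
    have hcg : Set.EqOn (fun s : ℝ => (τ * s) ^ p * Real.exp (-(τ * s)))
        (fun s : ℝ => τ ^ p * (s ^ p * Real.exp (-(τ * s)))) (Set.uIcc 0 δ) := by
      intro s hs
      rw [Set.uIcc_of_le hδ.le] at hs
      simp only
      rw [Real.mul_rpow hτ.le hs.1]
      ring
    rw [intervalIntegral.integral_congr hcg, intervalIntegral.integral_const_mul] at h
    -- h : τ ^ p * A = τ⁻¹ * ∫ ξ in 0..τ*δ, ...
    have h2 : (∫ ξ in (0:ℝ)..(τ * δ), ξ ^ p * Real.exp (-ξ)) = τ * (τ ^ p * A) := by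
      rw [h, ← mul_assoc, mul_inv_cancel₀ hτ.ne', one_mul]
    rw [h2]
    rw [show τ * (τ ^ p * A) = (τ ^ (1:ℝ) * τ ^ p) * A from by rw [Real.rpow_one]; ring,
      ← Real.rpow_add hτ, ← mul_assoc, ← Real.rpow_add hτ,
      show -(p + 1) + (1 + p) = (0:ℝ) from by ring, Real.rpow_zero, one_mul]
  -- integrability and bound for exp(-(τ z.2)) on D
  have hBint : IntegrableOn (fun z : EuclideanSpace ℝ (Fin n) × ℝ =>
      Real.exp (-(τ * z.2))) D volume := by
    refine Measure.integrableOn_of_bounded hDfin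
      ((Real.measurable_exp.comp (measurable_snd.const_mul τ).neg).aestronglyMeasurable)
      (M := Real.exp (-(τ * T₀))) ?_
    filter_upwards [ae_restrict_mem hD] with z hz
    rw [Real.norm_eq_abs, abs_of_pos (Real.exp_pos _)]
    have := (hDsub hz).2.1
    exact Real.exp_le_exp.2 (by nlinarith)
  set B : ℝ := ∫ z in D, Real.exp (-(τ * z.2)) with hB
  have hBnn : 0 ≤ B :=
    integral_nonneg fun z => (Real.exp_pos _).le
  have hJleB : Real.exp (-(τ * T₀)) * (C₁ * A) ≤ B := by
    rw [← hJ]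
    have := hJleI
    rw [← ofReal_integral_eq_lintegral_ofReal hBint
      (Filter.Eventually.of_forall fun z => (Real.exp_pos _).le)] at this
    exact (ENNReal.ofReal_le_ofReal_iff hBnn).1 this
  -- comparison of main integral
  set low : EuclideanSpace ℝ (Fin n) × ℝ → ℝ :=
    fun z => (C₂ * Real.exp (Real.sqrt τ * m)) * Real.exp (-(τ * z.2)) with hlow
  have hlowInt : Integrable low (volume.restrict D) :=
    (hBint.const_mul _)
  have hmono : ∫ z in D, low z
      ≤ ∫ z in D, ρ z * Real.exp (Real.sqrt τ * (inner ℝ z.1 ω : ℝ) - τ * z.2) := by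
    refine integral_mono_ae hlowInt (hint τ hτ) ?_
    filter_upwards [hρ, ae_restrict_mem hD] with z h1 h2
    have hmx : m ≤ (inner ℝ z.1 ω : ℝ) := hmle _ (hDsub h2).1
    have e1 : Real.exp (Real.sqrt τ * m - τ * z.2)
        ≤ Real.exp (Real.sqrt τ * (inner ℝ z.1 ω : ℝ) - τ * z.2) := by
      apply Real.exp_le_exp.2
      have := mul_le_mul_of_nonneg_left hmx (Real.sqrt_nonneg τ)
      linarith
    have e2 : low z = C₂ * Real.exp (Real.sqrt τ * m - τ * z.2) := by
      rw [hlow]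
      simp only
      rw [show Real.sqrt τ * m - τ * z.2 = Real.sqrt τ * m + -(τ * z.2) from by ring,
        Real.exp_add, mul_assoc]
    rw [e2]
    exact mul_le_mul h1 e1 (Real.exp_pos _).le (le_trans hC₂.le h1)
  have hlowval : ∫ z in D, low z = (C₂ * Real.exp (Real.sqrt τ * m)) * B := by
    rw [hlow, hB]
    exact integral_const_mul _ _
  -- final assembly
  have hexp : Real.exp (τ * T₀) * Real.exp (-(τ * T₀)) = 1 := by
    rw [← Real.exp_add, add_neg_cancel, Real.exp_zero]
  have hchain : C₁ * C₂ * Real.exp (Real.sqrt τ * m) * A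
      ≤ Real.exp (τ * T₀) *
        ∫ z in D, ρ z * Real.exp (Real.sqrt τ * (inner ℝ z.1 ω : ℝ) - τ * z.2) := by
    have h1 : (C₂ * Real.exp (Real.sqrt τ * m)) * (Real.exp (-(τ * T₀)) * (C₁ * A))
        ≤ (C₂ * Real.exp (Real.sqrt τ * m)) * B :=
      mul_le_mul_of_nonneg_left hJleB
        (mul_nonneg hC₂.le (Real.exp_pos _).le)
    have h2 : (C₂ * Real.exp (Real.sqrt τ * m)) * B
        ≤ ∫ z in D, ρ z * Real.exp (Real.sqrt τ * (inner ℝ z.1 ω : ℝ) - τ * z.2) := by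
      rw [← hlowval]; exact hmono
    have h3 := le_trans h1 h2
    have h4 := mul_le_mul_of_nonneg_left h3 (Real.exp_pos (τ * T₀)).le
    calc C₁ * C₂ * Real.exp (Real.sqrt τ * m) * A
        = Real.exp (τ * T₀) * ((C₂ * Real.exp (Real.sqrt τ * m)) *
            (Real.exp (-(τ * T₀)) * (C₁ * A))) := by
          rw [show Real.exp (τ * T₀) * ((C₂ * Real.exp (Real.sqrt τ * m)) *
              (Real.exp (-(τ * T₀)) * (C₁ * A)))
            = (Real.exp (τ * T₀) * Real.exp (-(τ * T₀))) *
              (C₁ * C₂ * Real.exp (Real.sqrt τ * m) * A) from by ring, hexp, one_mul]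
      _ ≤ _ := h4
  calc C₁ * C₂ * Real.exp (Real.sqrt τ * m) * τ ^ (-(p + 1)) *
        ∫ ξ in (0:ℝ)..(τ * δ), ξ ^ p * Real.exp (-ξ)
      = C₁ * C₂ * Real.exp (Real.sqrt τ * m) * A := by rw [← hsub2]; ring
    _ ≤ _ := hchain
end
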